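/- Let (X_i) be an ε-ranking supermartingale with ε > 0 with respect to a stopping time T, with E[X_0] < ∞. Then T is almost-surely finite: P[T < ∞] = 1. -/

import Mathlib

open MeasureTheory Filter

/-- For an ε-RSM `X` (ε > 0) with respect to a stopping time `T`,
the stopping time is almost surely finite: `P[T < ∞] = 1`. -/
theorem rsm_stopping_time_finite
    {Ω : Type*} {m0 : MeasurableSpace Ω} {μ : Measure Ω} [IsProbabilityMeasure μ]
    (ℱ : Filtration ℕ m0) (X : ℕ → Ω → ℝ) (T : Ω → ℕ∞) (ε : ℝ) (hε : 0 < ε)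
    (hstop : ∀ i : ℕ, MeasurableSet[ℱ i] {ω | T ω ≤ (i : ℕ∞)})
    (hadapted : Adapted ℱ X)
    (hint : ∀ i, Integrable (X i) μ)
    (hnonneg : ∀ i ω, 0 ≤ X i ω)
    (hdec : ∀ i : ℕ, ∀ ω : Ω,
      (μ[X (i + 1) | ℱ i]) ω ≤ X i ω - ε * Set.indicator {ω | (i : ℕ∞) < T ω} (fun _ => 1) ω) :
    μ {ω | T ω < ⊤} = 1 := by
  set p : ℕ → ℝ := fun i => (μ {ω | (i : ℕ∞) < T ω}).toReal with hp
  have hmeas : ∀ i : ℕ, MeasurableSet {ω | (i : ℕ∞) < T ω} := by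
    intro i
    have h := ((ℱ.le i) _ (hstop i)).compl
    simpa [Set.compl_setOf, not_le] using h
  have hpnn : ∀ i, 0 ≤ p i := fun i => ENNReal.toReal_nonneg
  have hind_int : ∀ i : ℕ,
      Integrable (Set.indicator {ω | (i : ℕ∞) < T ω} (fun _ => (1:ℝ))) μ :=
    fun i => (integrable_const 1).indicator (hmeas i)
  have hstep : ∀ i, ε * p i ≤ (∫ ω, X i ω ∂μ) - ∫ ω, X (i+1) ω ∂μ := by
    intro i
    have h1 : ∫ ω, (μ[X (i+1)|ℱ i]) ω ∂μ = ∫ ω, X (i+1) ω ∂μ :=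
      integral_condExp (ℱ.le i)
    have h2 : ∫ ω, (μ[X (i+1)|ℱ i]) ω ∂μ ≤
        ∫ ω, (X i ω - ε * Set.indicator {ω | (i : ℕ∞) < T ω} (fun _ => (1:ℝ)) ω) ∂μ := by
      refine integral_mono integrable_condExp ?_ (hdec i)
      exact (hint i).sub ((hind_int i).const_mul ε)
    rw [integral_sub (hint i) ((hind_int i).const_mul ε), integral_const_mul,
      integral_indicator_const (1:ℝ) (hmeas i)] at h2
    simp only [smul_eq_mul, mul_one] at h2
    rw [h1] at h2
    have hpi : p i = μ.real {ω | (i : ℕ∞) < T ω} := rfl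
    rw [hpi]
    linarith
  have hC : ∀ n : ℕ, (∑ i ∈ Finset.range n, p i) ≤ (∫ ω, X 0 ω ∂μ) / ε := by
    intro n
    have htel : ε * (∑ i ∈ Finset.range n, p i) ≤
        (∫ ω, X 0 ω ∂μ) - ∫ ω, X n ω ∂μ := by
      rw [Finset.mul_sum]
      calc ∑ i ∈ Finset.range n, ε * p i
          ≤ ∑ i ∈ Finset.range n, ((∫ ω, X i ω ∂μ) - ∫ ω, X (i+1) ω ∂μ) :=
            Finset.sum_le_sum fun i _ => hstep i
        _ = (∫ ω, X 0 ω ∂μ) - ∫ ω, X n ω ∂μ := by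
            rw [Finset.sum_range_sub' (fun i => ∫ ω, X i ω ∂μ) n]
    have hXn : 0 ≤ ∫ ω, X n ω ∂μ := integral_nonneg (hnonneg n)
    rw [le_div_iff₀ hε]
    linarith [htel]
  have hsum : Summable p :=
    summable_of_sum_range_le hpnn hC
  have hto0 : Tendsto p atTop (nhds 0) := hsum.tendsto_atTop_zero
  have hsub : ∀ i : ℕ, μ {ω | T ω = ⊤} ≤ μ {ω | (i : ℕ∞) < T ω} := by
    intro i
    refine measure_mono fun ω hω => ?_
    simp only [Set.mem_setOf_eq] at hω ⊢
    rw [hω]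
    exact ENat.coe_lt_top i
  have hzeroR : (μ {ω | T ω = ⊤}).toReal = 0 := by
    have hle : ∀ i, (μ {ω | T ω = ⊤}).toReal ≤ p i := by
      intro i
      exact ENNReal.toReal_mono (measure_ne_top μ _) (hsub i)
    have h1 : (μ {ω | T ω = ⊤}).toReal ≤ 0 :=
      le_of_tendsto_of_tendsto' tendsto_const_nhds hto0 hle
    exact le_antisymm h1 ENNReal.toReal_nonneg
  have hzero : μ {ω | T ω = ⊤} = 0 :=
    (ENNReal.toReal_eq_zero_iff _).mp hzeroR |>.resolve_right (measure_ne_top μ _)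
  have hmeasT : MeasurableSet {ω | T ω = ⊤} := by
    have heq : {ω | T ω = ⊤} = ⋂ i : ℕ, {ω | (i : ℕ∞) < T ω} := by
      ext ω
      simp only [Set.mem_setOf_eq, Set.mem_iInter]
      constructor
      · intro h i; rw [h]; exact ENat.coe_lt_top i
      · intro h
        by_contra hne
        obtain ⟨n, hn⟩ := WithTop.ne_top_iff_exists.mp hne
        exact absurd (hn ▸ h n) (lt_irrefl _)
    rw [heq]
    exact MeasurableSet.iInter fun i => hmeas i
  have hcompl : {ω | T ω < ⊤} = {ω | T ω = ⊤}ᶜ := by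
    ext ω; simp [lt_top_iff_ne_top]
  rw [hcompl, measure_compl hmeasT (measure_ne_top μ _), hzero, measure_univ]
  simp
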